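/- Let f : ℝ → ℝ be C², A = [ga, gb], and ḡ ∈ A satisfy the first-order condition f'(ḡ)(g - ḡ) ≥ 0 for all g ∈ A, together with f''(ḡ) v² > 0 for all nonzero v in the critical cone C(ḡ). Then ḡ is a strict local minimizer of f on A: there exist ε > 0 and δ > 0 such that f(ḡ) + (δ/2)|g - ḡ|² ≤ f(g) for all g ∈ A with |g - ḡ| ≤ ε. -/

import Mathlib

open Set

-- auxiliary: quadratic growth from second derivative lower bound
lemma aux_quad (f : ℝ → ℝ) (g m ε : ℝ) (hε : 0 < ε) (hf : ContDiff ℝ 2 f)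
    (hd0 : deriv f g = 0)
    (h2 : ∀ x ∈ Set.Icc (g-ε) (g+ε), m ≤ deriv (deriv f) x) :
    ∀ u ∈ Set.Icc (g-ε) (g+ε), f g + m/2*(u-g)^2 ≤ f u := by
  have hf1 : ContDiff ℝ 1 (deriv f) := by
    have := (contDiff_succ_iff_deriv (n := 1)).mp (by norm_num at hf ⊢; exact hf)
    exact this.2.2
  have hdf : Differentiable ℝ (deriv f) := hf1.differentiable (by norm_num)
  have hfd : Differentiable ℝ f := hf.differentiable (by norm_num)
  -- χ x = deriv f x - m*(x-g)
  set χ : ℝ → ℝ := fun x => deriv f x - m*(x-g) with hχ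
  have hχd : ∀ x, HasDerivAt χ (deriv (deriv f) x - m) x := by
    intro x
    exact ((hdf x).hasDerivAt).sub ((((hasDerivAt_id x).sub_const g).const_mul m).congr_deriv (mul_one m))
  have hχmono : MonotoneOn χ (Icc (g-ε) (g+ε)) := by
    apply monotoneOn_of_deriv_nonneg (convex_Icc _ _)
      (fun x _ => ((hχd x).continuousAt).continuousWithinAt)
      (fun x _ => ((hχd x).differentiableAt).differentiableWithinAt)
    intro x hx
    rw [interior_Icc] at hx
    rw [(hχd x).deriv]
    have := h2 x (Ioo_subset_Icc_self hx)
    linarith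
  have hgmem : g ∈ Icc (g-ε) (g+ε) := by constructor <;> linarith
  have hχg : χ g = 0 := by simp [hχ, hd0]
  -- φ x = f x - m/2*(x-g)^2 has deriv χ
  set φ : ℝ → ℝ := fun x => f x - m/2*(x-g)^2 with hφ
  have hφd : ∀ x, HasDerivAt φ (χ x) x := by
    intro x
    have h1 : HasDerivAt (fun x : ℝ => m/2*(x-g)^2) (m/2*(2*(x-g))) x := by
      exact (((hasDerivAt_id x).sub_const g).pow 2).const_mul (m/2) |>.congr_deriv (by simp [id_eq])
    have := ((hfd x).hasDerivAt).sub h1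
    convert this using 1
    · rfl
    · rfl
    · rfl
    simp only [hχ, id_eq]
    ring
  have hmono : MonotoneOn φ (Icc g (g+ε)) := by
    apply monotoneOn_of_deriv_nonneg (convex_Icc _ _)
      (fun x _ => ((hφd x).continuousAt).continuousWithinAt)
      (fun x _ => ((hφd x).differentiableAt).differentiableWithinAt)
    intro x hx
    rw [interior_Icc] at hx
    rw [(hφd x).deriv, ← hχg]
    exact hχmono hgmem ⟨by linarith [hx.1], by linarith [hx.2]⟩ (le_of_lt hx.1)
  have hanti : AntitoneOn φ (Icc (g-ε) g) := by
    apply antitoneOn_of_deriv_nonpos (convex_Icc _ _)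
      (fun x _ => ((hφd x).continuousAt).continuousWithinAt)
      (fun x _ => ((hφd x).differentiableAt).differentiableWithinAt)
    intro x hx
    rw [interior_Icc] at hx
    rw [(hφd x).deriv, ← hχg]
    exact hχmono ⟨by linarith [hx.1], by linarith [hx.2]⟩ hgmem (le_of_lt hx.2)
  intro u hu
  have key : φ g ≤ φ u := by
    rcases le_total g u with h | h
    · exact hmono ⟨le_rfl, by linarith⟩ ⟨h, hu.2⟩ h
    · exact hanti ⟨hu.1, h⟩ ⟨by linarith, le_rfl⟩ h
  simp only [hφ] at key
  nlinarith [key]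

/-- Second-order sufficient condition: if `ḡ ∈ [ga, gb]` satisfies the
first-order condition `f'(ḡ)(g − ḡ) ≥ 0` on `A = [ga, gb]` and
`f''(ḡ) v² > 0` for all nonzero `v` in the critical cone, then `ḡ` is a strict
local minimizer with quadratic growth. -/
theorem second_order_sufficient_condition (f : ℝ → ℝ) (ga gb g : ℝ)
    (hab : ga ≤ gb) (hf : ContDiff ℝ 2 f) (hg : g ∈ Set.Icc ga gb)
    (hfirst : ∀ u ∈ Set.Icc ga gb, deriv f g * (u - g) ≥ 0)
    (hsecond : ∀ v : ℝ, v ≠ 0 → (g = ga → 0 ≤ v) → (g = gb → v ≤ 0) →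
      (deriv f g ≠ 0 → v = 0) → deriv (deriv f) g * v ^ 2 > 0) :
    ∃ ε > 0, ∃ δ > 0, ∀ u ∈ Set.Icc ga gb, |u - g| ≤ ε →
      f g + δ / 2 * |u - g| ^ 2 ≤ f u := by
  by_cases hc : deriv f g = 0
  · by_cases hab' : ga = gb
    · refine ⟨1, one_pos, 1, one_pos, ?_⟩
      intro u hu _
      have hug : u = g := by
        subst hab'
        have h1 := hu.1; have h2 := hu.2; have h3 := hg.1; have h4 := hg.2
        linarith
      simp [hug]
    · have hlt : ga < gb := lt_of_le_of_ne hab hab'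
      set d := deriv (deriv f) g with hd'
      have hd : 0 < d := by
        rcases lt_or_eq_of_le hg.2 with h | h
        · have := hsecond 1 one_ne_zero (fun _ => zero_le_one)
            (fun hgb => absurd hgb (ne_of_lt h)) (fun hne => absurd hc hne)
          nlinarith
        · have hga : g ≠ ga := by rw [h]; exact (ne_of_gt hlt)
          have := hsecond (-1) (by norm_num) (fun hga' => absurd hga' hga)
            (fun _ => by norm_num) (fun hne => absurd hc hne)
          nlinarith
      have hf1 : ContDiff ℝ 1 (deriv f) := by
        have := (contDiff_succ_iff_deriv (n := 1)).mp (by norm_num at hf ⊢; exact hf)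
        exact this.2.2
      have hcont : Continuous (deriv (deriv f)) := (contDiff_one_iff_deriv.mp hf1).2
      have hnhds : {x : ℝ | d/2 < deriv (deriv f) x} ∈ nhds g :=
        hcont.continuousAt.preimage_mem_nhds (Ioi_mem_nhds (by linarith))
      obtain ⟨ε, hε, hball⟩ := Metric.mem_nhds_iff.mp hnhds
      refine ⟨ε/2, by positivity, d/2, by positivity, ?_⟩
      intro u hu hue
      have haux := aux_quad f g (d/2) (ε/2) (by positivity) hf hc ?_ u ?_
      · calc f g + d/2/2 * |u-g|^2 = f g + d/2/2 * (u-g)^2 := by rw [sq_abs]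
          _ ≤ f u := haux
      · intro x hx
        have : x ∈ Metric.ball g ε := by
          rw [Metric.mem_ball, Real.dist_eq, abs_lt]
          constructor <;> [linarith [hx.1]; linarith [hx.2]]
        exact le_of_lt (hball this)
      · rw [Set.mem_Icc]
        rcases abs_le.mp hue with ⟨h1, h2⟩
        constructor <;> linarith
  · have hlo := hasDerivAt_iff_isLittleO.mp ((hf.differentiable (by norm_num) g).hasDerivAt)
    have hb := hlo.def (show (0:ℝ) < |deriv f g|/2 by positivity)
    rw [Metric.eventually_nhds_iff] at hb
    obtain ⟨ε, hε, hball⟩ := hb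
    refine ⟨ε/2, by positivity, |deriv f g|/ε, by positivity, ?_⟩
    intro u hu hue
    have tnn : (0:ℝ) ≤ |u - g| := abs_nonneg _
    have h1 := hball (y := u) (by rw [Real.dist_eq]; linarith)
    simp only [Real.norm_eq_abs, smul_eq_mul] at h1
    have h1' := (abs_le.mp h1).1
    have h2' : (u - g) * deriv f g = |deriv f g| * |u - g| := by
      rw [mul_comm, ← abs_mul]
      exact (abs_of_nonneg (hfirst u hu)).symm
    have key : |deriv f g|/ε/2 * |u-g|^2 ≤ |deriv f g|/2 * |u-g| := by
      rw [div_div, div_mul_eq_mul_div, div_le_iff₀ (by positivity : (0:ℝ) < ε*2)]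
      have hte : |u - g| ≤ ε := by linarith
      nlinarith [abs_nonneg (deriv f g), mul_le_mul_of_nonneg_left hte
        (mul_nonneg (abs_nonneg (deriv f g)) tnn)]
    linarith [key, h1', h2']
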